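/- Two-sided geometric tail sum bound (Lemma two_rho_sum of the paper): for all ρ ∈ (0,1), positive integers c ≥ 1 and q ≥ 1, and integers a < b: (i) Σ_{t ∈ ℤ} min(ρ^{⌊(t−a)/(cq)⌋}, ρ^{⌊(b−t)/q⌋}) ≤ q(c+1) ρ^{⌊(b−a)/((c+1)q)⌋} / (1−ρ); and (ii) Σ_{t ∈ ℤ} min(ρ^{⌊(t−a)/q⌋}, ρ^{⌊(b−t)/(cq)⌋}) ≤ q(c+1) ρ^{⌊(b−a)/((c+1)q)⌋} / (1−ρ). -/

import Mathlib

private lemma floorCastDiv (m : ℤ) (d : ℕ) : ⌊(m : ℝ) / (d : ℝ)⌋ = m / (d : ℤ) := by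
  rw [show ((m:ℝ)/(d:ℝ)) = (((m:ℚ)/(d:ℚ) : ℚ) : ℝ) by push_cast; ring]
  rw [Rat.floor_cast, Rat.floor_intCast_div_natCast]

set_option maxHeartbeats 1000000 in
private lemma geomDiv (ρ : ℝ) (h0 : 0 < ρ) (h1 : ρ < 1) (d : ℕ) (hd : 0 < d) :
    HasSum (fun n : ℕ => ρ ^ (n / d)) ((d : ℝ) / (1 - ρ)) := by
  have hne : NeZero d := ⟨hd.ne'⟩
  have hgeo : HasSum (fun n : ℕ => ρ ^ n) (1 - ρ)⁻¹ := hasSum_geometric_of_lt_one h0.le h1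
  have hone : HasSum (fun _ : Fin d => (1:ℝ)) (d : ℝ) := by
    simpa using hasSum_fintype (fun _ : Fin d => (1:ℝ))
  have hsm : Summable (fun p : ℕ × Fin d => ρ ^ p.1 * 1) :=
    hgeo.summable.mul_of_nonneg Summable.of_finite (fun n => by positivity)
      (fun _ => zero_le_one)
  have hprod : HasSum (fun p : ℕ × Fin d => ρ ^ p.1 * 1) ((1 - ρ)⁻¹ * d) :=
    hgeo.mul hone hsm
  have hcomp : (fun n : ℕ => ρ ^ (n / d)) ∘ ⇑(Nat.divModEquiv d).symm
      = fun p : ℕ × Fin d => ρ ^ p.1 * 1 := by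
    funext p
    simp only [Function.comp_apply, Nat.divModEquiv_symm_apply, mul_one]
    rw [Nat.add_comm, Nat.add_mul_div_right _ _ hd, Nat.div_eq_of_lt p.2.is_lt, Nat.zero_add]
  have key : HasSum ((fun n : ℕ => ρ ^ (n / d)) ∘ ⇑(Nat.divModEquiv d).symm) ((1 - ρ)⁻¹ * d) := by
    rw [hcomp]; exact hprod
  have := (Equiv.hasSum_iff _).mp key
  convert this using 1
  rw [div_eq_mul_inv, mul_comm]

private lemma keyLem (ρ : ℝ) (h0 : 0 < ρ) (h1 : ρ < 1) (d₁ d₂ : ℕ) (hd₁ : 0 < d₁)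
    (hd₂ : 0 < d₂) (a b K : ℤ) (hK : 0 ≤ K) (hba : (d₁ : ℤ) * K + (d₂ : ℤ) * K ≤ b - a) :
    Summable (fun t : ℤ =>
        min (ρ ^ ⌊((t - a : ℤ) : ℝ) / (d₁ : ℝ)⌋) (ρ ^ ⌊((b - t : ℤ) : ℝ) / (d₂ : ℝ)⌋)) ∧
      ∑' t : ℤ,
          min (ρ ^ ⌊((t - a : ℤ) : ℝ) / (d₁ : ℝ)⌋) (ρ ^ ⌊((b - t : ℤ) : ℝ) / (d₂ : ℝ)⌋)
        ≤ ((d₁ : ℝ) + (d₂ : ℝ)) * ρ ^ K / (1 - ρ) := by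
  set t₀ : ℤ := a + (d₁ : ℤ) * K with ht₀
  set f : ℤ → ℝ := fun t =>
    min (ρ ^ ⌊((t - a : ℤ) : ℝ) / (d₁ : ℝ)⌋) (ρ ^ ⌊((b - t : ℤ) : ℝ) / (d₂ : ℝ)⌋) with hf
  set G : ℤ → ℝ := Int.rec (fun n => ρ ^ K * ρ ^ (n / d₁)) (fun n => ρ ^ K * ρ ^ (n / d₂))
    with hG
  have hρK : 0 < ρ ^ K := zpow_pos h0 K
  have hG1 : HasSum (fun n : ℕ => ρ ^ K * ρ ^ (n / d₁)) (ρ ^ K * ((d₁ : ℝ) / (1 - ρ))) :=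
    (geomDiv ρ h0 h1 d₁ hd₁).mul_left _
  have hG2 : HasSum (fun n : ℕ => ρ ^ K * ρ ^ (n / d₂)) (ρ ^ K * ((d₂ : ℝ) / (1 - ρ))) :=
    (geomDiv ρ h0 h1 d₂ hd₂).mul_left _
  have hGsum : HasSum G (ρ ^ K * ((d₁ : ℝ) / (1 - ρ)) + ρ ^ K * ((d₂ : ℝ) / (1 - ρ))) :=
    hG1.int_rec hG2
  have hg : HasSum (fun t : ℤ => G (t - t₀))
      (ρ ^ K * ((d₁ : ℝ) / (1 - ρ)) + ρ ^ K * ((d₂ : ℝ) / (1 - ρ))) := by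
    exact ((Equiv.subRight t₀).hasSum_iff).mpr hGsum
  have hfnonneg : ∀ t : ℤ, 0 ≤ f t := by
    intro t
    exact le_min (zpow_pos h0 _).le (zpow_pos h0 _).le
  have hle : ∀ t : ℤ, f t ≤ G (t - t₀) := by
    intro t
    rcases le_or_gt t₀ t with h | h
    · -- t = t₀ + n
      obtain ⟨n, hn⟩ : ∃ n : ℕ, t - t₀ = (n : ℤ) := ⟨(t - t₀).toNat, by omega⟩
      rw [hn]
      show f t ≤ ρ ^ K * ρ ^ (n / d₁)
      calc f t ≤ ρ ^ ⌊((t - a : ℤ) : ℝ) / (d₁ : ℝ)⌋ := min_le_left _ _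
        _ = ρ ^ K * ρ ^ (n / d₁) := by
            rw [floorCastDiv]
            have : t - a = (n : ℤ) + (d₁ : ℤ) * K := by omega
            rw [this, Int.add_mul_ediv_left _ _ (by exact_mod_cast hd₁.ne')]
            rw [show ((n : ℤ) / (d₁ : ℤ)) = ((n / d₁ : ℕ) : ℤ) by exact (Int.natCast_div n d₁).symm]
            rw [add_comm, zpow_add₀ h0.ne', zpow_natCast]
    · -- t = t₀ - 1 - n
      obtain ⟨n, hn⟩ : ∃ n : ℕ, t - t₀ = Int.negSucc n := by
        refine ⟨(t₀ - 1 - t).toNat, ?_⟩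
        rw [Int.negSucc_eq]
        omega
      rw [hn]
      show f t ≤ ρ ^ K * ρ ^ (n / d₂)
      calc f t ≤ ρ ^ ⌊((b - t : ℤ) : ℝ) / (d₂ : ℝ)⌋ := min_le_right _ _
        _ ≤ ρ ^ K * ρ ^ (n / d₂) := by
            rw [floorCastDiv]
            have hbt : (n : ℤ) + (d₂ : ℤ) * K ≤ b - t := by
              have := Int.negSucc_eq n
              omega
            have hdiv : (n : ℤ) / (d₂ : ℤ) + K ≤ (b - t) / (d₂ : ℤ) := by
              have h2 : ((n : ℤ) + (d₂ : ℤ) * K) / (d₂ : ℤ) ≤ (b - t) / (d₂ : ℤ) :=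
                Int.ediv_le_ediv (by exact_mod_cast hd₂) hbt
              rwa [Int.add_mul_ediv_left _ _ (by exact_mod_cast hd₂.ne')] at h2
            calc ρ ^ ((b - t) / (d₂ : ℤ)) ≤ ρ ^ ((n : ℤ) / (d₂ : ℤ) + K) :=
                  zpow_le_zpow_right_of_le_one₀ h0 h1.le hdiv
              _ = ρ ^ K * ρ ^ (n / d₂) := by
                  rw [show ((n : ℤ) / (d₂ : ℤ)) = ((n / d₂ : ℕ) : ℤ) by
                    exact (Int.natCast_div n d₂).symm]
                  rw [zpow_add₀ h0.ne', zpow_natCast, mul_comm]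
  have hsummable : Summable f :=
    Summable.of_nonneg_of_le hfnonneg hle hg.summable
  refine ⟨hsummable, ?_⟩
  calc ∑' t : ℤ, f t ≤ ∑' t : ℤ, G (t - t₀) := Summable.tsum_le_tsum hle hsummable hg.summable
    _ = ρ ^ K * ((d₁ : ℝ) / (1 - ρ)) + ρ ^ K * ((d₂ : ℝ) / (1 - ρ)) := hg.tsum_eq
    _ = ((d₁ : ℝ) + (d₂ : ℝ)) * ρ ^ K / (1 - ρ) := by ring

/-- Two-sided geometric tail sum bound: for `ρ ∈ (0,1)`, positive integers `c, q`, and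
integers `a < b`, the sums `Σ_{t∈ℤ} min(ρ^{⌊(t−a)/(cq)⌋}, ρ^{⌊(b−t)/q⌋})` and
`Σ_{t∈ℤ} min(ρ^{⌊(t−a)/q⌋}, ρ^{⌊(b−t)/(cq)⌋})` converge and are bounded by
`q(c+1) ρ^{⌊(b−a)/((c+1)q)⌋}/(1−ρ)`. -/
theorem stmt10 (ρ : ℝ) (hρ : ρ ∈ Set.Ioo (0 : ℝ) 1) (c q : ℕ) (hc : 1 ≤ c) (hq : 1 ≤ q)
    (a b : ℤ) (hab : a < b) :
    (Summable (fun t : ℤ =>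
        min (ρ ^ ⌊((t - a : ℤ) : ℝ) / ((c * q : ℕ) : ℝ)⌋) (ρ ^ ⌊((b - t : ℤ) : ℝ) / (q : ℝ)⌋)) ∧
      ∑' t : ℤ,
          min (ρ ^ ⌊((t - a : ℤ) : ℝ) / ((c * q : ℕ) : ℝ)⌋) (ρ ^ ⌊((b - t : ℤ) : ℝ) / (q : ℝ)⌋)
        ≤ (q : ℝ) * ((c : ℝ) + 1) * ρ ^ ⌊((b - a : ℤ) : ℝ) / (((c : ℝ) + 1) * (q : ℝ))⌋
            / (1 - ρ)) ∧
    (Summable (fun t : ℤ =>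
        min (ρ ^ ⌊((t - a : ℤ) : ℝ) / (q : ℝ)⌋) (ρ ^ ⌊((b - t : ℤ) : ℝ) / ((c * q : ℕ) : ℝ)⌋)) ∧
      ∑' t : ℤ,
          min (ρ ^ ⌊((t - a : ℤ) : ℝ) / (q : ℝ)⌋) (ρ ^ ⌊((b - t : ℤ) : ℝ) / ((c * q : ℕ) : ℝ)⌋)
        ≤ (q : ℝ) * ((c : ℝ) + 1) * ρ ^ ⌊((b - a : ℤ) : ℝ) / (((c : ℝ) + 1) * (q : ℝ))⌋
            / (1 - ρ)) := by
  obtain ⟨h0, h1⟩ := hρ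
  set D : ℕ := (c + 1) * q with hD
  have hDpos : 0 < D := by positivity
  set K : ℤ := (b - a) / (D : ℤ) with hK
  have hfloorK : ⌊((b - a : ℤ) : ℝ) / (((c : ℝ) + 1) * (q : ℝ))⌋ = K := by
    rw [show ((c : ℝ) + 1) * (q : ℝ) = ((D : ℕ) : ℝ) by push_cast [hD]; ring]
    exact floorCastDiv _ _
  have hKnonneg : 0 ≤ K := Int.ediv_nonneg (by omega) (by exact_mod_cast hDpos.le)
  have hDK : (D : ℤ) * K ≤ b - a := by
    rw [hK]
    have h1' := Int.mul_ediv_add_emod (b - a) (D : ℤ)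
    have h2' := Int.emod_nonneg (b - a) (show (D : ℤ) ≠ 0 by exact_mod_cast hDpos.ne')
    linarith
  have hba1 : ((c * q : ℕ) : ℤ) * K + (q : ℤ) * K ≤ b - a := by
    have : ((c * q : ℕ) : ℤ) * K + (q : ℤ) * K = (D : ℤ) * K := by push_cast [hD]; ring
    omega
  have hba2 : ((q : ℕ) : ℤ) * K + ((c * q : ℕ) : ℤ) * K ≤ b - a := by omega
  have hcq : 0 < c * q := by positivity
  have H1 := keyLem ρ h0 h1 (c * q) q hcq (by omega) a b K hKnonneg hba1
  have H2 := keyLem ρ h0 h1 q (c * q) (by omega) hcq a b K hKnonneg hba2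
  have hcoef : ((c * q : ℕ) : ℝ) + (q : ℝ) = (q : ℝ) * ((c : ℝ) + 1) := by push_cast; ring
  have hcoef2 : ((q : ℕ) : ℝ) + ((c * q : ℕ) : ℝ) = (q : ℝ) * ((c : ℝ) + 1) := by
    push_cast; ring
  constructor
  · refine ⟨H1.1, ?_⟩
    rw [hfloorK]
    calc _ ≤ (((c * q : ℕ) : ℝ) + (q : ℝ)) * ρ ^ K / (1 - ρ) := H1.2
      _ = (q : ℝ) * ((c : ℝ) + 1) * ρ ^ K / (1 - ρ) := by rw [hcoef]
  · refine ⟨H2.1, ?_⟩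
    rw [hfloorK]
    calc _ ≤ (((q : ℕ) : ℝ) + ((c * q : ℕ) : ℝ)) * ρ ^ K / (1 - ρ) := H2.2
      _ = (q : ℝ) * ((c : ℝ) + 1) * ρ ^ K / (1 - ρ) := by rw [hcoef2]
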